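/- Let A : ℓ¹(ℕ) → Y be bounded linear, Y a Banach space, and suppose for some n and all ξ ∈ ℓ^∞(ℕ) with |supp ξ| ≤ n and entries in {-1,0,1}, there exists η ∈ Y* with ‖η‖ ≤ γ_n and P_{supp ξ} A* η = ξ (items (i) and (ii) of the source condition with M_n = all index sets of cardinality ≤ n). Then ‖Ax‖ ≥ γ_n⁻¹‖x‖₁ for all x ∈ ℓ¹(ℕ) with |supp x| ≤ n. -/

import Mathlib

noncomputable section

abbrev L1 : Type := lp (fun _ : ℕ => ℝ) 1

def e (k : ℕ) : L1 := lp.single 1 k 1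

def SuppLe (x : L1) (n : ℕ) : Prop :=
  ∃ s : Finset ℕ, s.card ≤ n ∧ ∀ k ∉ s, (x : ℕ → ℝ) k = 0

/-- A sign sequence: entries in {-1,0,1} with at most `n` nonzero entries. -/
def SignSeqLe (ξ : ℕ → ℝ) (n : ℕ) : Prop :=
  (∀ k, ξ k = -1 ∨ ξ k = 0 ∨ ξ k = 1) ∧
    ∃ s : Finset ℕ, s.card ≤ n ∧ ∀ k ∉ s, ξ k = 0

/-- Items (i) and (ii) of the source condition (with all index sets of cardinality ≤ n)
imply the restricted injectivity property `‖A x‖ ≥ γₙ⁻¹ ‖x‖₁` for `|supp x| ≤ n`.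
Here `[A*η]_k = η (A e⁽ᵏ⁾)` and `P_{supp ξ} A*η = ξ` is expressed componentwise on `supp ξ`. -/
theorem stmt8 {Y : Type*} [NormedAddCommGroup Y] [NormedSpace ℝ Y] [CompleteSpace Y]
    (A : L1 →L[ℝ] Y) (n : ℕ) (γ : ℝ) (hγ : 0 < γ)
    (hsource : ∀ ξ : ℕ → ℝ, SignSeqLe ξ n →
      ∃ η : StrongDual ℝ Y, ‖η‖ ≤ γ ∧ ∀ k, ξ k ≠ 0 → η (A (e k)) = ξ k) :
    ∀ x : L1, SuppLe x n → ‖A x‖ ≥ γ⁻¹ * ‖x‖ := by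
  intro x hx
  obtain ⟨s, hcard, hs⟩ := hx
  set ξ : ℕ → ℝ := fun k => Real.sign ((x : ℕ → ℝ) k) with hξdef
  have hξ : SignSeqLe ξ n := by
    refine ⟨fun k => ?_, s, hcard, fun k hk => by simp [hξdef, hs k hk]⟩
    rcases lt_trichotomy ((x : ℕ → ℝ) k) 0 with h | h | h
    · exact Or.inl (Real.sign_of_neg h)
    · exact Or.inr (Or.inl (by simp [hξdef, h]))
    · exact Or.inr (Or.inr (Real.sign_of_pos h))
  obtain ⟨η, hη, hAd⟩ := hsource ξ hξ
  -- x as a finite sum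
  have hxsum : x = ∑ k ∈ s, ((x : ℕ → ℝ) k) • e k := by
    apply lp.ext
    funext j
    rw [lp.coeFn_sum]
    simp only [Finset.sum_apply, lp.coeFn_smul, Pi.smul_apply, e, lp.single_apply,
      smul_eq_mul]
    by_cases hj : j ∈ s
    · rw [Finset.sum_eq_single j]
      · simp
      · intro b _ hb
        simp [Ne.symm hb]
      · intro h; exact absurd hj h
    · rw [hs j hj]
      refine (Finset.sum_eq_zero fun b hb => ?_).symm
      rcases eq_or_ne j b with rfl | hne
      · simp [hs j hj]
      · simp [hne]
  -- norm of x
  have hnorm : ‖x‖ = ∑ k ∈ s, |(x : ℕ → ℝ) k| := by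
    rw [lp.norm_eq_tsum_rpow (by norm_num) x]
    simp only [ENNReal.toReal_one, Real.rpow_one]
    rw [tsum_eq_sum (f := fun k => ‖(x : ℕ → ℝ) k‖) (s := s)
      (fun k hk => by simp [hs k hk])]
    simp [Real.norm_eq_abs]
  -- pairing
  have hpair : η (A x) = ‖x‖ := by
    conv_lhs => rw [hxsum]
    rw [map_sum, map_sum, hnorm]
    refine Finset.sum_congr rfl fun k _ => ?_
    rw [map_smul, map_smul]
    by_cases hk : (x : ℕ → ℝ) k = 0
    · simp [hk]
    · have hξk : ξ k ≠ 0 := by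
        simp [hξdef, Real.sign_eq_zero_iff, hk]
      rw [smul_eq_mul, hAd k hξk, hξdef]
      simp only
      rcases lt_trichotomy ((x : ℕ → ℝ) k) 0 with h | h | h
      · rw [Real.sign_of_neg h, abs_of_neg h]; ring
      · exact absurd h hk
      · rw [Real.sign_of_pos h, abs_of_pos h]; ring
  have hb : ‖x‖ ≤ γ * ‖A x‖ := by
    calc ‖x‖ = η (A x) := hpair.symm
    _ ≤ ‖η (A x)‖ := le_abs_self _
    _ ≤ ‖η‖ * ‖A x‖ := η.le_opNorm _
    _ ≤ γ * ‖A x‖ := by gcongr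
  rw [ge_iff_le, inv_mul_le_iff₀ hγ]
  linarith
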